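/- Let Γ be a C² surface with polygonal approximation Γ_h satisfying the geometric estimates ‖1−δ_h‖_{L^∞(Γ_h)} ≤ C h². Then for all v, w ∈ L²(Γ_h) with lifts v^ℓ, w^ℓ ∈ L²(Γ): |∫_Γ v^ℓ w^ℓ dA − ∫_{Γ_h} v w dA_h| ≤ C h² ‖v^ℓ‖_{L²(Γ)} ‖w^ℓ‖_{L²(Γ)}. -/

import Mathlib

open MeasureTheory

private lemma cauchy_schwarz_abs {α : Type*} [MeasurableSpace α] {μ : Measure α}
    {f g : α → ℝ} (hf : MemLp f 2 μ) (hg : MemLp g 2 μ) :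
    ∫ y, |f y * g y| ∂μ ≤ Real.sqrt (∫ y, f y ^ 2 ∂μ) * Real.sqrt (∫ y, g y ^ 2 ∂μ) := by
  have hpq : (2:ℝ).HolderConjugate 2 := Real.holderConjugate_iff.2 ⟨by norm_num, by norm_num⟩
  have h2 : ENNReal.ofReal (2:ℝ) = 2 := by norm_num
  have hf' : MemLp f (ENNReal.ofReal (2:ℝ)) μ := h2 ▸ hf
  have hg' : MemLp g (ENNReal.ofReal (2:ℝ)) μ := h2 ▸ hg
  have key := integral_mul_norm_le_Lp_mul_Lq hpq hf' hg'
  have e1 : ∫ y, |f y * g y| ∂μ = ∫ a, ‖f a‖ * ‖g a‖ ∂μ := by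
    congr 1; funext a; rw [abs_mul]; simp [Real.norm_eq_abs]
  have e2 : ∫ a, ‖f a‖ ^ (2:ℝ) ∂μ = ∫ y, f y ^ 2 ∂μ := by
    congr 1; funext a
    rw [Real.norm_eq_abs, show ((2:ℝ)) = ((2:ℕ):ℝ) by norm_num, Real.rpow_natCast, sq_abs]
  have e3 : ∫ a, ‖g a‖ ^ (2:ℝ) ∂μ = ∫ y, g y ^ 2 ∂μ := by
    congr 1; funext a
    rw [Real.norm_eq_abs, show ((2:ℝ)) = ((2:ℕ):ℝ) by norm_num, Real.rpow_natCast, sq_abs]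
  rw [e1]
  rw [e2, e3] at key
  calc ∫ a, ‖f a‖ * ‖g a‖ ∂μ
      ≤ (∫ y, f y ^ 2 ∂μ) ^ (1 / (2:ℝ)) * (∫ y, g y ^ 2 ∂μ) ^ (1 / (2:ℝ)) := key
    _ = Real.sqrt (∫ y, f y ^ 2 ∂μ) * Real.sqrt (∫ y, g y ^ 2 ∂μ) := by
        rw [Real.sqrt_eq_rpow, Real.sqrt_eq_rpow]

/-- L² geometric consistency estimate (5.11) of Lemma 5.5: if the area quotient
`δ_h` (from `dA = δ_h dA_h` under the normal projection `a : Γh ≃ Γ`) satisfies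
`‖1 − δ_h‖_∞ ≤ C h²`, then for `h` small there is `C' > 0` such that for all
`v, w ∈ L²(Γh)` with lifts `v^ℓ = v ∘ a⁻¹, w^ℓ = w ∘ a⁻¹`,
`|∫_Γ v^ℓ w^ℓ dA − ∫_{Γh} v w dA_h| ≤ C' h² ‖v^ℓ‖_{L²(Γ)} ‖w^ℓ‖_{L²(Γ)}`. -/
theorem geometric_L2_consistency
    {Γ : Type*} [MeasurableSpace Γ] (μ : Measure Γ) (C : ℝ) (hC : 0 < C) :
    ∃ h₀ > (0:ℝ), ∃ C' > (0:ℝ), ∀ h : ℝ, 0 < h → h < h₀ →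
      ∀ (Γh : Type) [MeasurableSpace Γh], ∀ (μh : Measure Γh) (a : Γh ≃ Γ)
        (δh : Γh → ℝ),
      (∀ x, |1 - δh x| ≤ C * h ^ 2) →
      -- change of variables between the surface measures
      (∀ g : Γ → ℝ, ∫ y, g y ∂μ = ∫ x, g (a x) * δh x ∂μh) →
      ∀ v w : Γh → ℝ,
        MemLp (fun y => v (a.symm y)) 2 μ → MemLp (fun y => w (a.symm y)) 2 μ →
        MemLp v 2 μh → MemLp w 2 μh →
        |(∫ y, v (a.symm y) * w (a.symm y) ∂μ) - ∫ x, v x * w x ∂μh| ≤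
          C' * h ^ 2 * Real.sqrt (∫ y, (v (a.symm y)) ^ 2 ∂μ) *
            Real.sqrt (∫ y, (w (a.symm y)) ^ 2 ∂μ) := by
  refine ⟨Real.sqrt (1 / (2 * C)), Real.sqrt_pos.2 (by positivity), 2 * C, by positivity, ?_⟩
  intro h hh hh0 Γh _ μh a δh hδ hcov v w hV hW hv hw
  set c : ℝ := C * h ^ 2 with hcdef
  have hc0 : 0 ≤ c := by positivity
  have hc : c ≤ 1 / 2 := by
    have h2 : h ^ 2 < 1 / (2 * C) := by
      have := (Real.lt_sqrt hh.le).1 hh0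
      linarith
    have := mul_lt_mul_of_pos_left h2 hC
    rw [hcdef]
    calc C * h ^ 2 ≤ C * (1 / (2 * C)) := by nlinarith
      _ = 1 / 2 := by field_simp
  have hδpos : ∀ x, (1:ℝ) / 2 ≤ δh x := by
    intro x
    have := (abs_le.1 (hδ x)).2
    linarith
  have hδne : ∀ x, δh x ≠ 0 := fun x => by have := hδpos x; linarith
  -- shorthand functions
  set Pf : Γ → ℝ := fun y => v (a.symm y) * w (a.symm y) with hPfdef
  set qf : Γ → ℝ := fun y => v (a.symm y) * w (a.symm y) / δh (a.symm y) with hqfdef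
  -- P is integrable
  have hVm : AEStronglyMeasurable (fun y => v (a.symm y)) μ := hV.1
  have hWm : AEStronglyMeasurable (fun y => w (a.symm y)) μ := hW.1
  have hPint : Integrable Pf μ := by
    refine Integrable.mono' ((hV.integrable_sq.add hW.integrable_sq).div_const 2)
      (hVm.mul hWm) (Filter.Eventually.of_forall fun y => ?_)
    simp only [Real.norm_eq_abs, Pf, Pi.add_apply]
    rw [abs_mul]
    nlinarith [sq_nonneg (|v (a.symm y)| - |w (a.symm y)|), sq_abs (v (a.symm y)),
      sq_abs (w (a.symm y)), abs_nonneg (v (a.symm y)), abs_nonneg (w (a.symm y))]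
  -- change of variables for qf : ∫ qf dμ = ∫ v w dμh
  have hB : ∫ y, qf y ∂μ = ∫ x, v x * w x ∂μh := by
    rw [hcov qf]
    refine integral_congr_ae (Filter.Eventually.of_forall fun x => ?_)
    simp only [qf, Equiv.symm_apply_apply]
    rw [div_mul_cancel₀ _ (hδne x)]
  -- change of variables for Pf : ∫ Pf dμ = ∫ v w δh dμh
  have hA : ∫ y, Pf y ∂μ = ∫ x, (v x * w x) * δh x ∂μh := by
    rw [hcov Pf]
    refine integral_congr_ae (Filter.Eventually.of_forall fun x => ?_)
    simp only [Pf, Equiv.symm_apply_apply]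
  -- pointwise bound |Pf - qf| ≤ 2c |Pf|
  have hdiff : ∀ y, |Pf y - qf y| ≤ 2 * c * |Pf y| := by
    intro y
    set d := δh (a.symm y) with hd
    have hd2 : (1:ℝ)/2 ≤ d := hδpos _
    have hdne : d ≠ 0 := hδne _
    have habs : |1 - d| ≤ c := hδ _
    have heq : Pf y - qf y = Pf y * ((d - 1) / d) := by
      simp only [Pf, qf, ← hd]
      field_simp
    rw [heq, abs_mul, mul_comm (2 * c)]
    refine mul_le_mul_of_nonneg_left ?_ (abs_nonneg _)
    rw [abs_div, abs_of_pos (by linarith : (0:ℝ) < d), div_le_iff₀ (by linarith : (0:ℝ) < d)]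
    have : |d - 1| = |1 - d| := abs_sub_comm d 1
    nlinarith [abs_nonneg (1 - d)]
  by_cases hmeas : AEStronglyMeasurable qf μ
  · -- main case: qf is (a.e.) measurable, hence integrable
    have hqint : Integrable qf μ := by
      refine Integrable.mono' (hPint.abs.const_mul 2) hmeas
        (Filter.Eventually.of_forall fun y => ?_)
      have h1 := hdiff y
      have h2 : |qf y| ≤ |Pf y - qf y| + |Pf y| := by
        have ha := abs_sub_abs_le_abs_sub (qf y) (Pf y)
        have hb := abs_sub_comm (qf y) (Pf y)
        linarith
      simp only [Real.norm_eq_abs]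
      nlinarith [abs_nonneg (Pf y)]
    have hsplit : (∫ y, Pf y ∂μ) - ∫ x, v x * w x ∂μh = ∫ y, (Pf y - qf y) ∂μ := by
      rw [← hB, integral_sub hPint hqint]
    have hCS : ∫ y, |Pf y| ∂μ ≤
        Real.sqrt (∫ y, (v (a.symm y)) ^ 2 ∂μ) * Real.sqrt (∫ y, (w (a.symm y)) ^ 2 ∂μ) :=
      cauchy_schwarz_abs hV hW
    calc |(∫ y, v (a.symm y) * w (a.symm y) ∂μ) - ∫ x, v x * w x ∂μh|
        = |∫ y, (Pf y - qf y) ∂μ| := by rw [← hsplit]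
      _ ≤ ∫ y, |Pf y - qf y| ∂μ := by
          simpa [Real.norm_eq_abs] using norm_integral_le_integral_norm (fun y => Pf y - qf y)
      _ ≤ ∫ y, 2 * c * |Pf y| ∂μ :=
          integral_mono (hPint.sub hqint).abs (hPint.abs.const_mul _)
            (fun y => hdiff y)
      _ = 2 * c * ∫ y, |Pf y| ∂μ := integral_const_mul _ _
      _ ≤ 2 * c * (Real.sqrt (∫ y, (v (a.symm y)) ^ 2 ∂μ) *
            Real.sqrt (∫ y, (w (a.symm y)) ^ 2 ∂μ)) :=
          mul_le_mul_of_nonneg_left hCS (by positivity)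
      _ = 2 * C * h ^ 2 * Real.sqrt (∫ y, (v (a.symm y)) ^ 2 ∂μ) *
            Real.sqrt (∫ y, (w (a.symm y)) ^ 2 ∂μ) := by rw [hcdef]; ring
  · -- degenerate case: qf is not a.e. measurable; then v*w = 0 a.e. on μh
    have hpint : Integrable (fun x => v x * w x) μh := by
      refine Integrable.mono' ((hv.integrable_sq.add hw.integrable_sq).div_const 2)
        (hv.1.mul hw.1) (Filter.Eventually.of_forall fun x => ?_)
      simp only [Real.norm_eq_abs, Pi.add_apply]
      rw [abs_mul]
      nlinarith [sq_nonneg (|v x| - |w x|), sq_abs (v x), sq_abs (w x),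
        abs_nonneg (v x), abs_nonneg (w x)]
    have hp0 : (fun x => v x * w x) =ᵐ[μh] 0 := by
      by_cases habsm : AEStronglyMeasurable (fun y => |qf y|) μ
      · -- |qf| measurable, qf not: both |qf|±qf nonmeasurable
        have key : ∀ (s : ℝ), s = 1 ∨ s = -1 →
            (fun x => |v x * w x| + s * (v x * w x)) =ᵐ[μh] 0 := by
          intro s hs
          have hnm : ¬ AEStronglyMeasurable (fun y => |qf y| + s * qf y) μ := by
            intro hm
            apply hmeas
            have h1 : AEStronglyMeasurable (fun y => s * qf y) μ := by
              have h2 := hm.sub habsm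
              refine h2.congr (Filter.Eventually.of_forall fun y => ?_)
              simp only [Pi.sub_apply]
              ring
            have h3 := h1.const_mul s⁻¹
            refine h3.congr (Filter.Eventually.of_forall fun y => ?_)
            rcases hs with rfl | rfl <;> norm_num
          have hni : ¬ Integrable (fun y => |qf y| + s * qf y) μ :=
            fun hint => hnm hint.1
          have h0 : (0:ℝ) = ∫ x, |v x * w x| + s * (v x * w x) ∂μh := by
            rw [← integral_undef hni, hcov (fun y => |qf y| + s * qf y)]
            refine integral_congr_ae (Filter.Eventually.of_forall fun x => ?_)
            simp only [qf, Equiv.symm_apply_apply]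
            have hd : (0:ℝ) < δh x := by have := hδpos x; linarith
            rw [abs_div, abs_of_pos hd]
            field_simp
          have hnn : 0 ≤ᵐ[μh] fun x => |v x * w x| + s * (v x * w x) := by
            refine Filter.Eventually.of_forall fun x => ?_
            show (0:ℝ) ≤ |v x * w x| + s * (v x * w x)
            rcases hs with rfl | rfl <;>
              nlinarith [le_abs_self (v x * w x), neg_abs_le (v x * w x)]
          have hint : Integrable (fun x => |v x * w x| + s * (v x * w x)) μh := by
            have h1 : Integrable (fun x => |v x * w x|) μh := hpint.abs
            have h2 : Integrable (fun x => s * (v x * w x)) μh := hpint.const_mul s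
            exact h1.add h2
          have := (integral_eq_zero_iff_of_nonneg_ae hnn hint).1 h0.symm
          exact this
        have k1 := key 1 (Or.inl rfl)
        have k2 := key (-1) (Or.inr rfl)
        filter_upwards [k1, k2] with x h1 h2
        simp only [Pi.zero_apply] at h1 h2 ⊢
        linarith
      · -- |qf| not measurable: ∫|qf| = 0 = ∫ |v w| dμh
        have hni : ¬ Integrable (fun y => |qf y|) μ := fun hint => habsm hint.1
        have h0 : (0:ℝ) = ∫ x, |v x * w x| ∂μh := by
          rw [← integral_undef hni, hcov (fun y => |qf y|)]
          refine integral_congr_ae (Filter.Eventually.of_forall fun x => ?_)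
          simp only [qf, Equiv.symm_apply_apply]
          have hd : (0:ℝ) < δh x := by have := hδpos x; linarith
          rw [abs_div, abs_of_pos hd, div_mul_cancel₀ _ (hδne x)]
        have hnn : 0 ≤ᵐ[μh] fun x => |v x * w x| :=
          Filter.Eventually.of_forall fun x => abs_nonneg _
        have := (integral_eq_zero_iff_of_nonneg_ae hnn hpint.abs).1 h0.symm
        filter_upwards [this] with x hx
        simp only [Pi.zero_apply] at hx ⊢
        exact abs_eq_zero.1 hx
    have hBzero : ∫ x, v x * w x ∂μh = 0 := by
      rw [integral_congr_ae hp0]; simp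
    have hAzero : ∫ y, Pf y ∂μ = 0 := by
      rw [hA]
      have : (fun x => (v x * w x) * δh x) =ᵐ[μh] 0 := by
        filter_upwards [hp0] with x hx
        simp only [Pi.zero_apply] at hx ⊢
        rw [hx, zero_mul]
      rw [integral_congr_ae this]; simp
    have : (∫ y, v (a.symm y) * w (a.symm y) ∂μ) = 0 := hAzero
    rw [this, hBzero, sub_zero, abs_zero]
    positivity
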